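/- In a free group, the centralizer of any nontrivial element is infinite cyclic. -/

import Mathlib

private lemma my_chain_reduce {α : Type*} [DecidableEq α] {L : List (α × Bool)}
    (h : L.Chain' (fun x y => ¬(x.1 = y.1 ∧ x.2 = !y.2))) : FreeGroup.reduce L = L := by
  induction L with
  | nil => rfl
  | cons x L ih =>
    have hL : FreeGroup.reduce L = L := ih h.tail
    rw [FreeGroup.reduce.cons, hL]
    cases L with
    | nil => rfl
    | cons y t =>
      have hxy : ¬(x.1 = y.1 ∧ x.2 = !y.2) := (List.isChain_cons_cons.1 h).1
      simp [hxy]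

private lemma my_reduce_chain {α : Type*} [DecidableEq α] {L : List (α × Bool)}
    (h : FreeGroup.reduce L = L) : L.Chain' (fun x y => ¬(x.1 = y.1 ∧ x.2 = !y.2)) := by
  induction L with
  | nil => exact List.isChain_nil
  | cons x L ih =>
    rw [FreeGroup.reduce.cons] at h
    rcases hr : FreeGroup.reduce L with _ | ⟨y, t⟩
    · rw [hr] at h
      have hL : L = [] := by
        have h' : [x] = x :: L := h
        injection h' with _ h2
        exact h2.symm
      subst hL; exact List.isChain_singleton _
    · rw [hr] at h
      by_cases hc : x.1 = y.1 ∧ x.2 = !y.2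
      · exfalso
        change (if x.1 = y.1 ∧ x.2 = !y.2 then t else x :: y :: t) = x :: L at h
        rw [if_pos hc] at h
        have hlen : (FreeGroup.reduce L).length ≤ L.length :=
          (FreeGroup.Red.sublist (FreeGroup.reduce.red)).length_le
        rw [hr] at hlen
        have h2 := congrArg List.length h
        simp only [List.length_cons] at hlen h2
        omega
      · simp only [hc, if_false] at h
        have hL : L = y :: t := by
          injection h with _ h2
          exact h2.symm
        have hred : FreeGroup.reduce L = L := by rw [hr, hL]
        refine List.isChain_cons.2 ⟨?_, ih hred⟩
        intro z hz
        rw [hL] at hz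
        simp at hz
        subst hz
        exact hc

private lemma my_cons_eq_append {α : Type*} {a : α} :
    ∀ {l : List α}, a :: l = l ++ [a] → l = List.replicate l.length a := by
  intro l
  induction l with
  | nil => intro _; rfl
  | cons x t ih =>
    intro h
    simp only [List.cons_append, List.cons.injEq] at h
    obtain ⟨rfl, h2⟩ := h
    have := ih h2
    simp [List.replicate_succ, ← this]

private lemma my_commute_trivial {α : Type*} [DecidableEq α] {a b : α} (hab : a ≠ b)
    {z : FreeGroup α} (ha : Commute z (FreeGroup.of a)) (hb : Commute z (FreeGroup.of b))
    : z = 1 := by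
  by_contra hz
  obtain ⟨w, hw0⟩ : ∃ w, z.toWord = w := ⟨z.toWord, rfl⟩
  have hw : w ≠ [] := fun h => hz (FreeGroup.toWord_eq_nil_iff.mp (hw0.trans h))
  have hred : FreeGroup.reduce w = w := hw0 ▸ FreeGroup.reduce_toWord z
  have hchain := my_reduce_chain hred
  have hzw : z = FreeGroup.mk w := by rw [← hw0, FreeGroup.mk_toWord]
  -- choose d ∈ {a, b} with d ≠ (w.getLast hw).1
  obtain ⟨d, hd, hdlast⟩ : ∃ d, (d = a ∨ d = b) ∧ d ≠ (w.getLast hw).1 := by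
    by_cases h : (w.getLast hw).1 = a
    · exact ⟨b, Or.inr rfl, fun hh => hab (h.symm.trans hh.symm)⟩
    · exact ⟨a, Or.inl rfl, fun hh => h hh.symm⟩
  set t : Bool := if (w.head hw).1 = d then (w.head hw).2 else true with ht
  have hcd : Commute z (FreeGroup.of d) := by rcases hd with rfl | rfl <;> assumption
  have hx : Commute z (FreeGroup.mk [(d, t)]) := by
    cases t
    · have : FreeGroup.mk [(d, false)] = (FreeGroup.mk [(d, true)])⁻¹ := by
        rw [FreeGroup.inv_mk]; rfl
      rw [this]; exact hcd.inv_right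
    · exact hcd
  have h1 : (FreeGroup.mk [(d, t)] * z).toWord = (d, t) :: w := by
    rw [hzw, FreeGroup.mul_mk, FreeGroup.toWord_mk]
    apply my_chain_reduce
    refine List.isChain_cons.2 ⟨?_, hchain⟩
    intro y hy
    change y ∈ w.head? at hy
    rw [List.head?_eq_head hw, Option.mem_some_iff] at hy
    subst hy
    rintro ⟨he1, he2⟩
    by_cases hc : (w.head hw).1 = d
    · rw [ht, if_pos hc] at he2; simp at he2
    · exact hc he1.symm
  have h2 : (z * FreeGroup.mk [(d, t)]).toWord = w ++ [(d, t)] := by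
    rw [hzw, FreeGroup.mul_mk, FreeGroup.toWord_mk]
    apply my_chain_reduce
    refine List.isChain_append.2 ?_
    refine ⟨hchain, List.isChain_singleton _, ?_⟩
    intro x hx' y hy
    rw [List.getLast?_eq_getLast hw, Option.mem_some_iff] at hx'
    rw [List.head?_cons, Option.mem_some_iff] at hy
    subst hx'; subst hy
    rintro ⟨he1, _⟩
    exact hdlast he1.symm
  have heq : (d, t) :: w = w ++ [(d, t)] := by rw [← h1, ← h2, hx.eq]
  have hrep : w = List.replicate w.length (d, t) := my_cons_eq_append heq
  -- the other generator
  obtain ⟨e, he, hed⟩ : ∃ e, (e = a ∨ e = b) ∧ e ≠ d := by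
    rcases hd with rfl | rfl
    · exact ⟨b, Or.inr rfl, fun hh => hab hh.symm⟩
    · exact ⟨a, Or.inl rfl, hab⟩
  have hce : Commute z (FreeGroup.of e) := by rcases he with rfl | rfl <;> assumption
  have hofe : FreeGroup.of e = FreeGroup.mk [(e, true)] := rfl
  have h3 : (FreeGroup.of e * z).toWord = (e, true) :: w := by
    rw [hzw, hofe, FreeGroup.mul_mk, FreeGroup.toWord_mk]
    apply my_chain_reduce
    refine List.isChain_cons.2 ⟨?_, hchain⟩
    intro y hy
    have hyw : y ∈ w := List.mem_of_mem_head? hy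
    rw [hrep] at hyw
    have : y = (d, t) := List.eq_of_mem_replicate hyw
    subst this
    rintro ⟨he1, _⟩
    exact hed he1
  have h4 : (z * FreeGroup.of e).toWord = w ++ [(e, true)] := by
    rw [hzw, hofe, FreeGroup.mul_mk, FreeGroup.toWord_mk]
    apply my_chain_reduce
    refine List.isChain_append.2 ?_
    refine ⟨hchain, List.isChain_singleton _, ?_⟩
    intro x hx' y hy
    have hxw : x ∈ w := by
      rw [List.getLast?_eq_getLast hw, Option.mem_some_iff] at hx'
      subst hx'
      exact List.getLast_mem hw
    rw [hrep] at hxw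
    have : x = (d, t) := List.eq_of_mem_replicate hxw
    subst this
    rw [List.head?_cons, Option.mem_some_iff] at hy
    subst hy
    rintro ⟨he1, _⟩
    exact hed he1.symm
  have heq2 : (e, true) :: w = w ++ [(e, true)] := by rw [← h3, ← h4, hce.eq]
  have hrep2 : w = List.replicate w.length (e, true) := my_cons_eq_append heq2
  have hkey : List.replicate w.length (d, t) = List.replicate w.length (e, true) :=
    hrep.symm.trans hrep2
  obtain ⟨n, hn⟩ : ∃ n, w.length = n + 1 :=
    Nat.exists_eq_succ_of_ne_zero (fun h => hw (List.length_eq_zero_iff.mp h))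
  rw [hn, List.replicate_succ, List.replicate_succ] at hkey
  injection hkey with hkey _
  exact hed (congrArg Prod.fst hkey).symm

/-- `FreeGroup Unit` is `ℤ`. -/
private noncomputable def myFreeGroupUnitMulEquiv : FreeGroup Unit ≃* Multiplicative ℤ := by
  refine MonoidHom.toMulEquiv
    (FreeGroup.lift (fun _ => Multiplicative.ofAdd (1 : ℤ)))
    (zpowersHom (FreeGroup Unit) (FreeGroup.of ())) ?_ ?_
  · apply FreeGroup.ext_hom
    intro a
    simp
  · apply MonoidHom.ext_mint
    simp

/-- In a free group, the centralizer of any nontrivial element is infinite cyclic. -/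
theorem stmt_1 (G : Type*) [Group G] [IsFreeGroup G] (g : G) (hg : g ≠ 1) :
    Nonempty (Subgroup.centralizer ({g} : Set G) ≃* Multiplicative ℤ) := by
  classical
  have hgC : g ∈ Subgroup.centralizer ({g} : Set G) := by
    rw [Subgroup.mem_centralizer_iff]
    rintro h rfl
    rfl
  let C := Subgroup.centralizer ({g} : Set G)
  haveI : IsFreeGroup C := inferInstance
  let e : C ≃* FreeGroup (IsFreeGroup.Generators C) := IsFreeGroup.toFreeGroup C
  set S := IsFreeGroup.Generators C with hS
  let g' : C := ⟨g, hgC⟩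
  have hg' : g' ≠ 1 := fun h => hg (congrArg Subtype.val h)
  have hcent : ∀ x : C, Commute x g' := by
    intro x
    apply Subtype.ext
    have hx := Subgroup.mem_centralizer_iff.mp x.2 g rfl
    simpa using hx.symm
  have hz1 : e g' ≠ 1 := fun h => hg' (by simpa using congrArg e.symm h)
  have hzcomm : ∀ y : FreeGroup S, Commute (e g') y := by
    intro y
    have h0 : Commute g' (e.symm y) := (hcent (e.symm y)).symm
    have h1 := h0.map e.toMonoidHom
    simpa using h1
  have hsub : ∀ a b : S, a = b := by
    intro a b
    by_contra hab
    exact hz1 (my_commute_trivial hab (hzcomm _) (hzcomm _))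
  have hne : Nonempty S := by
    by_contra hSne
    apply hz1
    rw [← FreeGroup.toWord_eq_nil_iff]
    cases hzw : (e g').toWord with
    | nil => rfl
    | cons x l => exact absurd ⟨x.1⟩ hSne
  obtain ⟨a⟩ := hne
  let u : S ≃ Unit := ⟨fun _ => (), fun _ => a, fun x => (hsub x a).symm, fun _ => rfl⟩
  exact ⟨(e.trans (FreeGroup.freeGroupCongr u)).trans myFreeGroupUnitMulEquiv⟩
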